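/- Let α > 0. Then there exist positive reals ε, γ̄, λ₁, λ₂ with λ₁ > 0, λ₂ > 0, ε < α − γ̄, and ε > λ₁·C² + γ̄ (for any fixed constant C > 0), such that the 4×4 symmetric matrix M₀ with rows (λ₁, 0, −αε/2, 0), (0, α − ε − γ̄, −α/2, 0), (−αε/2, −α/2, λ₂, 0), (0, 0, 0, ε − λ₁C² − γ̄) is positive definite. -/

import Mathlib

set_option maxHeartbeats 1000000 in
theorem feasibility_delta_zero (α C : ℝ) (hα : 0 < α) (hC : 0 < C) :
    ∃ ε γbar lam1 lam2 : ℝ, 0 < ε ∧ 0 < γbar ∧ 0 < lam1 ∧ 0 < lam2 ∧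
      ε < α - γbar ∧ ε > lam1 * C ^ 2 + γbar ∧
      (!![lam1, 0, -(α * ε) / 2, 0;
         0, α - ε - γbar, -α / 2, 0;
         -(α * ε) / 2, -α / 2, lam2, 0;
         0, 0, 0, ε - lam1 * C ^ 2 - γbar] : Matrix (Fin 4) (Fin 4) ℝ).PosDef := by
  have hC2 : (0:ℝ) < C ^ 2 := by positivity
  refine ⟨α / 2, α / 8, α / (8 * C ^ 2), α ^ 3 * C ^ 2 + 2 * α, by positivity, by positivity,
    by positivity, by positivity, by nlinarith, ?_, Matrix.posDef_iff_dotProduct_mulVec.mpr ⟨?_, ?_⟩⟩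
  · have : α / (8 * C ^ 2) * C ^ 2 = α / 8 := by field_simp
    rw [this]; nlinarith
  · -- IsHermitian
    refine Matrix.IsHermitian.ext fun i j => ?_
    fin_cases i <;> fin_cases j <;> simp [Matrix.conjTranspose_apply]
  · intro x hx
    obtain ⟨i, hi0⟩ := Function.ne_iff.mp hx
    obtain ⟨a, ha⟩ : ∃ y, x 0 = y := ⟨_, rfl⟩
    obtain ⟨b, hb⟩ : ∃ y, x 1 = y := ⟨_, rfl⟩
    obtain ⟨c, hc⟩ : ∃ y, x 2 = y := ⟨_, rfl⟩
    obtain ⟨d, hd⟩ : ∃ y, x 3 = y := ⟨_, rfl⟩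
    have hQ : dotProduct (star x)
        (Matrix.mulVec (!![α / (8 * C ^ 2), 0, -(α * (α / 2)) / 2, 0;
            0, α - α / 2 - α / 8, -α / 2, 0;
            -(α * (α / 2)) / 2, -α / 2, α ^ 3 * C ^ 2 + 2 * α, 0;
            0, 0, 0, α / 2 - α / (8 * C ^ 2) * C ^ 2 - α / 8] : Matrix (Fin 4) (Fin 4) ℝ) x) =
        α / (8 * C ^ 2) * a ^ 2 + (α - α / 2 - α / 8) * b ^ 2
          + (α ^ 3 * C ^ 2 + 2 * α) * c ^ 2
          + (α / 2 - α / (8 * C ^ 2) * C ^ 2 - α / 8) * d ^ 2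
          - (α * (α / 2)) * a * c - α * b * c := by
      simp [Matrix.mulVec, dotProduct, Fin.sum_univ_four, ha, hb, hc, hd]
      ring
    rw [hQ]
    have key : ∀ u : ℝ, u ≠ 0 → 0 < u ^ 2 := fun u hu => by positivity
    have hexp : ∀ Q : ℝ, Q = α / (8 * C ^ 2) * a ^ 2 + (α - α / 2 - α / 8) * b ^ 2
          + (α ^ 3 * C ^ 2 + 2 * α) * c ^ 2
          + (α / 2 - α / (8 * C ^ 2) * C ^ 2 - α / 8) * d ^ 2
          - (α * (α / 2)) * a * c - α * b * c →
        8 * C ^ 2 * Q = α * a ^ 2 + 3 * α * C ^ 2 * b ^ 2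
        + (8 * α ^ 3 * C ^ 4 + 16 * α * C ^ 2) * c ^ 2 + 2 * α * C ^ 2 * d ^ 2
        - 4 * α ^ 2 * C ^ 2 * a * c - 8 * α * C ^ 2 * b * c := by
      intro Q hQ'; rw [hQ']; field_simp; ring
    have h1 : 0 ≤ α * (a - 2 * α * C ^ 2 * c) ^ 2 := by positivity
    have h2 : 0 ≤ α * C ^ 2 * (3 * b - 4 * c) ^ 2 := by positivity
    have h3 : 0 ≤ α ^ 3 * C ^ 4 * c ^ 2 := by positivity
    have h8 : 0 < 8 * C ^ 2 * (α / (8 * C ^ 2) * a ^ 2 + (α - α / 2 - α / 8) * b ^ 2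
          + (α ^ 3 * C ^ 2 + 2 * α) * c ^ 2
          + (α / 2 - α / (8 * C ^ 2) * C ^ 2 - α / 8) * d ^ 2
          - (α * (α / 2)) * a * c - α * b * c) := by
      rw [hexp _ rfl]
      fin_cases i
      · have hia : a ≠ 0 := by rw [← ha]; exact hi0
        nlinarith [mul_pos hα (key a hia), h1, h3, h2,
          mul_nonneg hα.le (sq_nonneg (a - 4 * α * C ^ 2 * c)),
          mul_nonneg (mul_nonneg hα.le hC2.le) (sq_nonneg d),
          mul_nonneg (mul_nonneg hα.le hC2.le) (sq_nonneg c)]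
      · have hib : b ≠ 0 := by rw [← hb]; exact hi0
        nlinarith [mul_pos (mul_pos hα hC2) (key b hib), h1, h3,
          mul_nonneg (mul_nonneg hα.le hC2.le) (sq_nonneg (3 * b - 8 * c)),
          mul_nonneg (mul_nonneg hα.le hC2.le) (sq_nonneg d),
          mul_nonneg (mul_nonneg hα.le hC2.le) (sq_nonneg c)]
      · have hic : c ≠ 0 := by rw [← hc]; exact hi0
        nlinarith [mul_pos (mul_pos hα hC2) (key c hic), h1, h3, h2,
          mul_nonneg (mul_nonneg hα.le hC2.le) (sq_nonneg d)]
      · have hid : d ≠ 0 := by rw [← hd]; exact hi0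
        nlinarith [mul_pos (mul_pos hα hC2) (key d hid), h1, h3, h2,
          mul_nonneg (mul_nonneg hα.le hC2.le) (sq_nonneg c)]
    nlinarith [h8, hC2]
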